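/- Let k ≥ 2, n ≥ 2k, and k+1 ≤ p ≤ n−1 be integers. Then the spectral radius of G' = K_{p-1, n+k-p+1} ⊔ \widehat{K_{n-p+1, p-k+1}} is the largest root of P₂(x) = x⁴ − [n(n+k−p−1) + (p−1)(p−k+1)]x² + (n+k−p−1)(p−k+1)(n−p+1)(p−1). -/

import Mathlib

open SimpleGraph

/-- Spectral radius: supremum of the (real) eigenvalues of the adjacency matrix. -/
noncomputable def specRad {V : Type*} [Fintype V] [DecidableEq V] (G : SimpleGraph V) : ℝ :=
  sSup {x : ℝ | Module.End.HasEigenvalue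
    (Matrix.toLin' (@SimpleGraph.adjMatrix ℝ V G (Classical.decRel _) _ _)) x}

/-- The map on edges used by the `(x,y)`-shift: replace `y` by `x`. -/
def shiftMap {V : Type*} [DecidableEq V] (x y : V) (e : Sym2 V) : Sym2 V :=
  Sym2.map (fun v => if v = y then x else v) e

open scoped Classical in
/-- The `(x,y)`-shift of a graph. -/
noncomputable def shiftGraph {V : Type*} [DecidableEq V] (G : SimpleGraph V) (x y : V) :
    SimpleGraph V :=
  SimpleGraph.fromEdgeSet
    ((fun e => if y ∈ e ∧ x ∉ e ∧ shiftMap x y e ∉ G.edgeSet then shiftMap x y e else e) ''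
      G.edgeSet)

/-- Balanced bipartite graph on `[2n]` with parts `X = {0,…,n-1}`, `Y = {n,…,2n-1}`:
`x ∈ X` is adjacent to `y ∈ Y` iff `x < a` or `y < 2n - b`.
`bipG n (k-1) 1 = K_{k-1,n-1} ⊔ quasi-complement of K_{n-k+1,1}`. -/
def bipG (n a b : ℕ) : SimpleGraph (Fin (2*n)) where
  Adj u v := (u.val < n ∧ n ≤ v.val ∧ (u.val < a ∨ v.val < 2*n - b)) ∨
             (v.val < n ∧ n ≤ u.val ∧ (v.val < a ∨ u.val < 2*n - b))
  symm := by constructor; intro u v h; tauto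
  loopless := by constructor; intro u h; rcases h with ⟨h1, h2, -⟩ | ⟨h1, h2, -⟩ <;> omega

/-- `H` is a rainbow `k`-factor of the family `F`. -/
def IsRainbowFactor {V : Type*} {m : ℕ} (F : Fin m → SimpleGraph V) (k : ℕ)
    (H : SimpleGraph V) : Prop :=
  (∀ v, (H.neighborSet v).ncard = k) ∧
  ∃ φ : H.edgeSet ≃ Fin m, ∀ e : H.edgeSet, (e : Sym2 V) ∈ (F (φ e)).edgeSet

section aux
open Finset
lemma bipG_adj {n a b : ℕ} {u v : Fin (2*n)} : (bipG n a b).Adj u v ↔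
    ((u.val < n ∧ n ≤ v.val ∧ (u.val < a ∨ v.val < 2*n - b)) ∨
     (v.val < n ∧ n ≤ u.val ∧ (v.val < a ∨ u.val < 2*n - b))) := Iff.rfl

lemma sum_ite_val_const (m l r : ℕ) (v : Fin m → ℝ) (c : ℝ)
    (hv : ∀ j : Fin m, l ≤ j.val → j.val < r → v j = c) (hr : r ≤ m) (hlr : l ≤ r) :
    ∑ j : Fin m, (if l ≤ j.val ∧ j.val < r then v j else 0) = ((r:ℝ) - (l:ℝ)) * c := by
  have h1 : ∑ j : Fin m, (if l ≤ j.val ∧ j.val < r then v j else 0)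
      = ∑ j : Fin m, (if l ≤ j.val ∧ j.val < r then c else 0) := by
    refine Finset.sum_congr rfl fun j _ => ?_
    by_cases h : l ≤ j.val ∧ j.val < r
    · rw [if_pos h, if_pos h, hv j h.1 h.2]
    · rw [if_neg h, if_neg h]
  rw [h1, Fin.sum_univ_eq_sum_range (fun t => if l ≤ t ∧ t < r then c else 0) m,
    ← Finset.sum_filter]
  have h2 : (Finset.range m).filter (fun t => l ≤ t ∧ t < r) = Finset.Ico l r := by
    ext t; simp only [Finset.mem_filter, Finset.mem_range, Finset.mem_Ico]; omega
  rw [h2, Finset.sum_const, Nat.card_Ico, nsmul_eq_mul, Nat.cast_sub hlr]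

/-- Sum of `v` over the index interval `[l, r)`. -/
noncomputable def SIco (m l r : ℕ) (v : Fin m → ℝ) : ℝ :=
  ∑ j : Fin m, if l ≤ j.val ∧ j.val < r then v j else 0

section rows
variable {n a b : ℕ} [inst : DecidableRel (bipG n a b).Adj] (v : Fin (2*n) → ℝ)
variable (han : a ≤ n) (hbn : b ≤ n)

lemma row_split (i : Fin (2*n)) (l r : ℕ)
    (hadj : ∀ j : Fin (2*n), (bipG n a b).Adj i j ↔ (l ≤ j.val ∧ j.val < r)) :
    (∑ j : Fin (2*n), if (bipG n a b).Adj i j then v j else 0) = SIco (2*n) l r v := by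
  refine Finset.sum_congr rfl fun j _ => ?_
  exact if_congr (hadj j) rfl rfl

lemma row_split2 (i : Fin (2*n)) (l mm r : ℕ)
    (hadj : ∀ j : Fin (2*n), (bipG n a b).Adj i j ↔ (l ≤ j.val ∧ j.val < r))
    (h1 : l ≤ mm) (h2 : mm ≤ r) :
    (∑ j : Fin (2*n), if (bipG n a b).Adj i j then v j else 0)
      = SIco (2*n) l mm v + SIco (2*n) mm r v := by
  rw [SIco, SIco, ← Finset.sum_add_distrib]
  refine Finset.sum_congr rfl fun j _ => ?_
  rw [if_congr (hadj j) rfl rfl]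
  by_cases hA : l ≤ j.val ∧ j.val < r
  · rw [if_pos hA]
    by_cases hB : l ≤ j.val ∧ j.val < mm
    · rw [if_pos hB, if_neg (by omega), add_zero]
    · rw [if_neg hB, if_pos (by omega), zero_add]
  · rw [if_neg hA, if_neg (by omega), if_neg (by omega), add_zero]

include han hbn in
lemma row1 (i : Fin (2*n)) (hi : i.val < a) :
    (∑ j : Fin (2*n), if (bipG n a b).Adj i j then v j else 0)
      = SIco (2*n) n (2*n-b) v + SIco (2*n) (2*n-b) (2*n) v := by
  refine row_split2 v i n (2*n-b) (2*n) (fun j => ?_) (by omega) (by omega)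
  have := j.isLt; have := i.isLt
  rw [bipG_adj]; omega

include han hbn in
lemma row2 (i : Fin (2*n)) (hi1 : a ≤ i.val) (hi2 : i.val < n) :
    (∑ j : Fin (2*n), if (bipG n a b).Adj i j then v j else 0)
      = SIco (2*n) n (2*n-b) v := by
  refine row_split (a := a) (b := b) v i n (2*n-b) (fun j => ?_)
  have := j.isLt; rw [bipG_adj]; omega

include han hbn in
lemma row3 (i : Fin (2*n)) (hi1 : n ≤ i.val) (hi2 : i.val < 2*n-b) :
    (∑ j : Fin (2*n), if (bipG n a b).Adj i j then v j else 0)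
      = SIco (2*n) 0 a v + SIco (2*n) a n v := by
  refine row_split2 v i 0 a n (fun j => ?_) (by omega) han
  have := j.isLt; rw [bipG_adj]; omega

include han hbn in
lemma row4 (i : Fin (2*n)) (hi1 : 2*n-b ≤ i.val) :
    (∑ j : Fin (2*n), if (bipG n a b).Adj i j then v j else 0)
      = SIco (2*n) 0 a v := by
  refine row_split (a := a) (b := b) v i 0 a (fun j => ?_)
  have := j.isLt; have := i.isLt; rw [bipG_adj]; omega

end rows

lemma mulVec_entry {V : Type*} [Fintype V] (G : SimpleGraph V) [DecidableRel G.Adj]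
    (v : V → ℝ) (i : V) :
    ((SimpleGraph.adjMatrix ℝ G).mulVec v) i = ∑ j, if G.Adj i j then v j else 0 := by
  simp [Matrix.mulVec, dotProduct, SimpleGraph.adjMatrix_apply, ite_mul]

lemma eig_iff {m : ℕ} (M : Matrix (Fin m) (Fin m) ℝ) (x : ℝ) :
    Module.End.HasEigenvalue (Matrix.toLin' M) x ↔
      ∃ v : Fin m → ℝ, v ≠ 0 ∧ M.mulVec v = x • v := by
  constructor
  · intro h
    obtain ⟨v, hv⟩ := h.exists_hasEigenvector
    refine ⟨v, hv.2, ?_⟩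
    have := Module.End.mem_eigenspace_iff.mp hv.1
    rwa [Matrix.toLin'_apply] at this
  · rintro ⟨v, hv0, hv⟩
    exact Module.End.hasEigenvalue_of_hasEigenvector
      ⟨Module.End.mem_eigenspace_iff.mpr (by rw [Matrix.toLin'_apply]; exact hv), hv0⟩

lemma rho_eig (n a b : ℕ) (ha : 1 ≤ a) (ha' : a+1 ≤ n) (hb : 1 ≤ b) (hb' : b+1 ≤ n)
    [inst : DecidableRel (bipG n a b).Adj] (ρ : ℝ) (hρ : 0 < ρ)
    (hq : ρ^4 - ((a:ℝ)*(n:ℝ) + ((n:ℝ)-(a:ℝ))*((n:ℝ)-(b:ℝ)))*ρ^2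
      + (a:ℝ)*(b:ℝ)*((n:ℝ)-(a:ℝ))*((n:ℝ)-(b:ℝ)) = 0) :
    ∃ v : Fin (2*n) → ℝ, v ≠ 0 ∧ (SimpleGraph.adjMatrix ℝ (bipG n a b)).mulVec v = ρ • v := by
  have hA1 : (1:ℝ) ≤ (a:ℝ) := by exact_mod_cast ha
  have hAN : (a:ℝ) + 1 ≤ (n:ℝ) := by exact_mod_cast ha'
  have hB1 : (1:ℝ) ≤ (b:ℝ) := by exact_mod_cast hb
  have hBN : (b:ℝ) + 1 ≤ (n:ℝ) := by exact_mod_cast hb'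
  refine ⟨fun j =>
    if j.val < a then ρ*(((n:ℝ)-(a:ℝ))*((n:ℝ)-(b:ℝ)))
    else if j.val < n then ρ*(ρ^2 - (a:ℝ)*(n:ℝ))
    else if j.val < 2*n-b then
      (a:ℝ)*(((n:ℝ)-(a:ℝ))*((n:ℝ)-(b:ℝ))) + ((n:ℝ)-(a:ℝ))*(ρ^2-(a:ℝ)*(n:ℝ))
    else (a:ℝ)*(((n:ℝ)-(a:ℝ))*((n:ℝ)-(b:ℝ))), ?_, ?_⟩
  all_goals
    set w : Fin (2*n) → ℝ := fun j =>
      if j.val < a then ρ*(((n:ℝ)-(a:ℝ))*((n:ℝ)-(b:ℝ)))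
      else if j.val < n then ρ*(ρ^2 - (a:ℝ)*(n:ℝ))
      else if j.val < 2*n-b then
        (a:ℝ)*(((n:ℝ)-(a:ℝ))*((n:ℝ)-(b:ℝ))) + ((n:ℝ)-(a:ℝ))*(ρ^2-(a:ℝ)*(n:ℝ))
      else (a:ℝ)*(((n:ℝ)-(a:ℝ))*((n:ℝ)-(b:ℝ))) with hwdef
  all_goals
    have hw1 : ∀ j : Fin (2*n), j.val < a →
        w j = ρ*(((n:ℝ)-(a:ℝ))*((n:ℝ)-(b:ℝ))) := fun j hj => by
      simp only [hwdef]; rw [if_pos hj]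
  all_goals
    have hw2 : ∀ j : Fin (2*n), a ≤ j.val → j.val < n →
        w j = ρ*(ρ^2 - (a:ℝ)*(n:ℝ)) := fun j h1 h2 => by
      simp only [hwdef]; rw [if_neg (by omega), if_pos h2]
  all_goals
    have hw3 : ∀ j : Fin (2*n), n ≤ j.val → j.val < 2*n-b →
        w j = (a:ℝ)*(((n:ℝ)-(a:ℝ))*((n:ℝ)-(b:ℝ))) + ((n:ℝ)-(a:ℝ))*(ρ^2-(a:ℝ)*(n:ℝ)) :=
      fun j h1 h2 => by
      simp only [hwdef]; rw [if_neg (by omega), if_neg (by omega), if_pos h2]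
  all_goals
    have hw4 : ∀ j : Fin (2*n), 2*n-b ≤ j.val →
        w j = (a:ℝ)*(((n:ℝ)-(a:ℝ))*((n:ℝ)-(b:ℝ))) := fun j h1 => by
      simp only [hwdef]; rw [if_neg (by omega), if_neg (by omega), if_neg (by omega)]
  · -- nonzero
    intro h
    have h0 := congrFun h ⟨0, by omega⟩
    rw [hw1 ⟨0, by omega⟩ (by show 0 < a; omega)] at h0
    simp only [Pi.zero_apply] at h0
    nlinarith [h0, mul_pos hρ (mul_pos
      (by linarith : (0:ℝ) < (n:ℝ)-(a:ℝ)) (by linarith : (0:ℝ) < (n:ℝ)-(b:ℝ)))]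
  · -- eigen equation
    have hS1 : SIco (2*n) 0 a w = (a:ℝ)*(ρ*(((n:ℝ)-(a:ℝ))*((n:ℝ)-(b:ℝ)))) := by
      unfold SIco
      rw [sum_ite_val_const (2*n) 0 a w _ (fun j _ h2 => hw1 j h2) (by omega) (by omega)]
      norm_num
    have hS2 : SIco (2*n) a n w = ((n:ℝ)-(a:ℝ))*(ρ*(ρ^2 - (a:ℝ)*(n:ℝ))) := by
      unfold SIco
      rw [sum_ite_val_const (2*n) a n w _ (fun j h1 h2 => hw2 j h1 h2) (by omega) (by omega)]
    have hT1 : SIco (2*n) n (2*n-b) w = ((n:ℝ)-(b:ℝ)) *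
        ((a:ℝ)*(((n:ℝ)-(a:ℝ))*((n:ℝ)-(b:ℝ))) + ((n:ℝ)-(a:ℝ))*(ρ^2-(a:ℝ)*(n:ℝ))) := by
      unfold SIco
      rw [sum_ite_val_const (2*n) n (2*n-b) w _ (fun j h1 h2 => hw3 j h1 h2) (by omega)
        (by omega), Nat.cast_sub (by omega)]
      push_cast; ring
    have hT2 : SIco (2*n) (2*n-b) (2*n) w
        = (b:ℝ)*((a:ℝ)*(((n:ℝ)-(a:ℝ))*((n:ℝ)-(b:ℝ)))) := by
      unfold SIco
      rw [sum_ite_val_const (2*n) (2*n-b) (2*n) w _ (fun j h1 _ => hw4 j h1) (by omega)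
        (by omega), Nat.cast_sub (by omega)]
      push_cast; ring
    funext i
    rw [mulVec_entry, Pi.smul_apply, smul_eq_mul]
    have hi2n := i.isLt
    by_cases h1 : i.val < a
    · rw [row1 w (by omega) (by omega) i h1, hT1, hT2, hw1 i h1]
      ring
    · by_cases h2 : i.val < n
      · rw [row2 w (by omega) (by omega) i (by omega) h2, hT1, hw2 i (by omega) h2]
        linear_combination (-1 : ℝ) * hq
      · by_cases h3 : i.val < 2*n-b
        · rw [row3 w (by omega) (by omega) i (by omega) h3, hS1, hS2,
            hw3 i (by omega) h3]
          ring
        · rw [row4 w (by omega) (by omega) i (by omega), hS1, hw4 i (by omega)]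
          ring

lemma class_sum (m l r : ℕ) (v : Fin m → ℝ) (x C : ℝ) (hr : r ≤ m) (hlr : l ≤ r)
    (h : ∀ j : Fin m, l ≤ j.val → j.val < r → x * v j = C) :
    x * SIco m l r v = ((r:ℝ) - (l:ℝ)) * C := by
  unfold SIco
  rw [Finset.mul_sum]
  rw [Finset.sum_congr rfl (fun j _ => by rw [mul_ite, mul_zero] :
    ∀ j ∈ Finset.univ, (x * if l ≤ j.val ∧ j.val < r then v j else 0)
      = (if l ≤ j.val ∧ j.val < r then x * v j else 0))]
  exact sum_ite_val_const m l r (fun j => x * v j) C h hr hlr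

lemma quartic_of_eig (n a b : ℕ) (ha : 1 ≤ a) (ha' : a+1 ≤ n) (hb : 1 ≤ b) (hb' : b+1 ≤ n)
    [inst : DecidableRel (bipG n a b).Adj] (x : ℝ) (hx0 : x ≠ 0) (v : Fin (2*n) → ℝ) (hv0 : v ≠ 0)
    (hv : (SimpleGraph.adjMatrix ℝ (bipG n a b)).mulVec v = x • v) :
    x^4 - ((a:ℝ)*(n:ℝ) + ((n:ℝ)-(a:ℝ))*((n:ℝ)-(b:ℝ)))*x^2
      + (a:ℝ)*(b:ℝ)*((n:ℝ)-(a:ℝ))*((n:ℝ)-(b:ℝ)) = 0 := by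
  have hA1 : (1:ℝ) ≤ (a:ℝ) := by exact_mod_cast ha
  have hAN : (a:ℝ) + 1 ≤ (n:ℝ) := by exact_mod_cast ha'
  have hB1 : (1:ℝ) ≤ (b:ℝ) := by exact_mod_cast hb
  have hBN : (b:ℝ) + 1 ≤ (n:ℝ) := by exact_mod_cast hb'
  have pv : ∀ i : Fin (2*n), (∑ j, if (bipG n a b).Adj i j then v j else 0) = x * v i := by
    intro i
    have h := congrFun hv i
    rw [mulVec_entry] at h
    rw [h, Pi.smul_apply, smul_eq_mul]
  have pv1 : ∀ i : Fin (2*n), i.val < a →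
      x * v i = SIco (2*n) n (2*n-b) v + SIco (2*n) (2*n-b) (2*n) v := fun i hi => by
    rw [← pv i, row1 v (by omega) (by omega) i hi]
  have pv2 : ∀ i : Fin (2*n), a ≤ i.val → i.val < n →
      x * v i = SIco (2*n) n (2*n-b) v := fun i h1 h2 => by
    rw [← pv i, row2 v (by omega) (by omega) i h1 h2]
  have pv3 : ∀ i : Fin (2*n), n ≤ i.val → i.val < 2*n-b →
      x * v i = SIco (2*n) 0 a v + SIco (2*n) a n v := fun i h1 h2 => by
    rw [← pv i, row3 v (by omega) (by omega) i h1 h2]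
  have pv4 : ∀ i : Fin (2*n), 2*n-b ≤ i.val →
      x * v i = SIco (2*n) 0 a v := fun i h1 => by
    rw [← pv i, row4 v (by omega) (by omega) i h1]
  have e1 := class_sum (2*n) 0 a v x _ (by omega) (by omega) (fun j _ h2 => pv1 j h2)
  have e2 := class_sum (2*n) a n v x _ (by omega) (by omega) (fun j h1 h2 => pv2 j h1 h2)
  have e3 := class_sum (2*n) n (2*n-b) v x _ (by omega) (by omega) (fun j h1 h2 => pv3 j h1 h2)
  have e4 := class_sum (2*n) (2*n-b) (2*n) v x _ (by omega) (by omega) (fun j h1 _ => pv4 j h1)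
  rw [Nat.cast_sub (show b ≤ 2*n by omega)] at e3 e4
  push_cast at e1 e2 e3 e4
  norm_num at e1
  -- abbreviations
  set S1 := SIco (2*n) 0 a v with hS1d
  set S2 := SIco (2*n) a n v with hS2d
  set T1 := SIco (2*n) n (2*n-b) v with hT1d
  set T2 := SIco (2*n) (2*n-b) (2*n) v with hT2d
  by_cases h0 : S1 = 0 ∧ S2 = 0
  · exfalso
    obtain ⟨hs1, hs2⟩ := h0
    have ht1 : T1 = 0 := by
      have : x * T1 = 0 := by rw [e3, hs1, hs2]; ring
      rcases mul_eq_zero.mp this with h | h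
      · exact absurd h hx0
      · exact h
    have ht2 : T2 = 0 := by
      have : x * T2 = 0 := by rw [e4, hs1]; ring
      rcases mul_eq_zero.mp this with h | h
      · exact absurd h hx0
      · exact h
    apply hv0
    funext i
    have hi2n := i.isLt
    have hz : x * v i = 0 := by
      by_cases h1 : i.val < a
      · rw [pv1 i h1, ht1, ht2]; ring
      · by_cases h2 : i.val < n
        · rw [pv2 i (by omega) h2, ht1]
        · by_cases h3 : i.val < 2*n-b
          · rw [pv3 i (by omega) h3, hs1, hs2]; ring
          · rw [pv4 i (by omega), hs1]
    rcases mul_eq_zero.mp hz with h | h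
    · exact absurd h hx0
    · exact h
  · -- derive the quadratic system
    have hα : x^2*S1 = (a:ℝ)*(n:ℝ)*S1 + (a:ℝ)*((n:ℝ)-(b:ℝ))*S2 := by
      linear_combination x*e1 + (a:ℝ)*e3 + (a:ℝ)*e4
    have hβ : x^2*S2 = ((n:ℝ)-(a:ℝ))*((n:ℝ)-(b:ℝ))*S1
        + ((n:ℝ)-(a:ℝ))*((n:ℝ)-(b:ℝ))*S2 := by
      linear_combination x*e2 + ((n:ℝ)-(a:ℝ))*e3
    rcases not_and_or.mp h0 with hS | hS
    · have key : (x^4 - ((a:ℝ)*(n:ℝ) + ((n:ℝ)-(a:ℝ))*((n:ℝ)-(b:ℝ)))*x^2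
          + (a:ℝ)*(b:ℝ)*((n:ℝ)-(a:ℝ))*((n:ℝ)-(b:ℝ))) * S1 = 0 := by
        linear_combination (x^2 - ((n:ℝ)-(a:ℝ))*((n:ℝ)-(b:ℝ)))*hα + (a:ℝ)*((n:ℝ)-(b:ℝ))*hβ
      rcases mul_eq_zero.mp key with h | h
      · exact h
      · exact absurd h hS
    · have key : (x^4 - ((a:ℝ)*(n:ℝ) + ((n:ℝ)-(a:ℝ))*((n:ℝ)-(b:ℝ)))*x^2
          + (a:ℝ)*(b:ℝ)*((n:ℝ)-(a:ℝ))*((n:ℝ)-(b:ℝ))) * S2 = 0 := by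
        linear_combination (x^2 - (a:ℝ)*(n:ℝ))*hβ + ((n:ℝ)-(a:ℝ))*((n:ℝ)-(b:ℝ))*hα
      rcases mul_eq_zero.mp key with h | h
      · exact h
      · exact absurd h hS

lemma bipG_main (n a b : ℕ) (ha : 1 ≤ a) (ha' : a+1 ≤ n) (hb : 1 ≤ b) (hb' : b+1 ≤ n) :
    (specRad (bipG n a b))^4
        - ((a:ℝ)*(n:ℝ) + ((n:ℝ)-(a:ℝ))*((n:ℝ)-(b:ℝ)))*(specRad (bipG n a b))^2
        + (a:ℝ)*(b:ℝ)*((n:ℝ)-(a:ℝ))*((n:ℝ)-(b:ℝ)) = 0 ∧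
      ∀ x : ℝ, x^4 - ((a:ℝ)*(n:ℝ) + ((n:ℝ)-(a:ℝ))*((n:ℝ)-(b:ℝ)))*x^2
        + (a:ℝ)*(b:ℝ)*((n:ℝ)-(a:ℝ))*((n:ℝ)-(b:ℝ)) = 0 → x ≤ specRad (bipG n a b) := by
  have hA1 : (1:ℝ) ≤ (a:ℝ) := by exact_mod_cast ha
  have hAN : (a:ℝ) + 1 ≤ (n:ℝ) := by exact_mod_cast ha'
  have hB1 : (1:ℝ) ≤ (b:ℝ) := by exact_mod_cast hb
  have hBN : (b:ℝ) + 1 ≤ (n:ℝ) := by exact_mod_cast hb'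
  have k1 : (0:ℝ) ≤ (n:ℝ)-(a:ℝ) := by linarith
  have k2 : (0:ℝ) ≤ (n:ℝ)-(b:ℝ) := by linarith
  set Tq : ℝ := (a:ℝ)*(n:ℝ) + ((n:ℝ)-(a:ℝ))*((n:ℝ)-(b:ℝ)) with hTq
  set Dq : ℝ := (a:ℝ)*(b:ℝ)*((n:ℝ)-(a:ℝ))*((n:ℝ)-(b:ℝ)) with hDq
  have hd : 0 ≤ Tq^2 - 4*Dq := by
    rw [hTq, hDq]
    nlinarith [sq_nonneg ((a:ℝ)*(n:ℝ) - ((n:ℝ)-(a:ℝ))*((n:ℝ)-(b:ℝ))),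
      mul_nonneg (mul_nonneg (mul_nonneg (by linarith : (0:ℝ) ≤ (a:ℝ)) k1) k2) k2]
  set s := Real.sqrt (Tq^2 - 4*Dq) with hs
  have hs2 : s^2 = Tq^2 - 4*Dq := Real.sq_sqrt hd
  have hs0 : 0 ≤ s := Real.sqrt_nonneg _
  have hT0 : 0 < Tq := by
    rw [hTq]
    nlinarith [mul_pos (by linarith : (0:ℝ) < (a:ℝ)) (by linarith : (0:ℝ) < (n:ℝ)),
      mul_nonneg k1 k2]
  have hm0 : 0 < (Tq + s)/2 := by linarith
  set r := Real.sqrt ((Tq+s)/2) with hr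
  have hr2 : r^2 = (Tq+s)/2 := Real.sq_sqrt hm0.le
  have hr0 : 0 < r := Real.sqrt_pos.mpr hm0
  have hrq : r^4 - Tq*r^2 + Dq = 0 := by
    have h1 : (r^2)^2 - Tq*r^2 + Dq = 0 := by
      rw [hr2]; linear_combination (1/4)*hs2
    linear_combination h1
  have hmax : ∀ x : ℝ, x^4 - Tq*x^2 + Dq = 0 → x ≤ r := by
    intro x hx
    have hfac : (x^2 - (Tq+s)/2) * (x^2 - (Tq-s)/2) = 0 := by
      linear_combination hx - (1/4)*hs2
    have hx2 : x^2 ≤ (Tq+s)/2 := by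
      rcases mul_eq_zero.mp hfac with h | h
      · nlinarith [h]
      · nlinarith [h, hs0]
    calc x ≤ |x| := le_abs_self x
      _ = Real.sqrt (x^2) := (Real.sqrt_sq_eq_abs x).symm
      _ ≤ r := by rw [hr]; exact Real.sqrt_le_sqrt hx2
  obtain ⟨v, hv0, hv⟩ := rho_eig n a b ha ha' hb hb' (inst := Classical.decRel _) r hr0
    (by rw [← hTq, ← hDq]; exact hrq)
  have hEig : r ∈ {x : ℝ | Module.End.HasEigenvalue
      (Matrix.toLin' (@SimpleGraph.adjMatrix ℝ (Fin (2*n)) (bipG n a b)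
        (Classical.decRel _) _ _)) x} :=
    (eig_iff _ r).mpr ⟨v, hv0, hv⟩
  have hup : ∀ y ∈ {x : ℝ | Module.End.HasEigenvalue
      (Matrix.toLin' (@SimpleGraph.adjMatrix ℝ (Fin (2*n)) (bipG n a b)
        (Classical.decRel _) _ _)) x}, y ≤ r := by
    intro y hy
    rcases eq_or_ne y 0 with h | h
    · rw [h]; exact hr0.le
    · obtain ⟨u, hu0, hu⟩ := (eig_iff _ y).mp hy
      refine hmax y ?_
      have := quartic_of_eig n a b ha ha' hb hb' (inst := Classical.decRel _) y h u hu0 hu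
      rw [← hTq, ← hDq] at this
      exact this
  have hspec : specRad (bipG n a b) = r := by
    unfold specRad
    exact le_antisymm (csSup_le ⟨r, hEig⟩ hup) (le_csSup ⟨r, hup⟩ hEig)
  rw [hspec]
  exact ⟨hrq, hmax⟩

end aux

/-- ρ(G') is the largest root of
P₂(x) = x⁴ − [n(n+k−p−1)+(p−1)(p−k+1)]x² + (n+k−p−1)(p−k+1)(n−p+1)(p−1). -/
theorem stmt2 (n k p : ℕ) (hk : 2 ≤ k) (hn : 2*k ≤ n) (hp1 : k+1 ≤ p) (hp2 : p ≤ n-1) :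
    (specRad (bipG n (p-1) (p-k+1)))^4
        - ((n:ℝ)*((n:ℝ)+(k:ℝ)-(p:ℝ)-1) + ((p:ℝ)-1)*((p:ℝ)-(k:ℝ)+1))
            * (specRad (bipG n (p-1) (p-k+1)))^2
        + ((n:ℝ)+(k:ℝ)-(p:ℝ)-1)*((p:ℝ)-(k:ℝ)+1)*((n:ℝ)-(p:ℝ)+1)*((p:ℝ)-1) = 0 ∧
      ∀ x : ℝ, x^4 - ((n:ℝ)*((n:ℝ)+(k:ℝ)-(p:ℝ)-1) + ((p:ℝ)-1)*((p:ℝ)-(k:ℝ)+1)) * x^2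
        + ((n:ℝ)+(k:ℝ)-(p:ℝ)-1)*((p:ℝ)-(k:ℝ)+1)*((n:ℝ)-(p:ℝ)+1)*((p:ℝ)-1) = 0 →
        x ≤ specRad (bipG n (p-1) (p-k+1)) := by
  have h1 := bipG_main n (p-1) (p-k+1) (by omega) (by omega) (by omega) (by omega)
  have ca : ((p-1 : ℕ):ℝ) = (p:ℝ)-1 := by
    rw [Nat.cast_sub (by omega)]; norm_num
  have cb : ((p-k+1 : ℕ):ℝ) = (p:ℝ)-(k:ℝ)+1 := by
    rw [Nat.cast_add, Nat.cast_sub (by omega), Nat.cast_one]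
  rw [ca, cb] at h1
  obtain ⟨h1a, h1b⟩ := h1
  constructor
  · linear_combination h1a
  · intro x hx
    apply h1b
    linear_combination hx
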